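/- For all x > 0, one has sinh x/x + (tanh(x/2)/(x/2))² > 2 + (23/720)·x³·tanh x. -/

import Mathlib

set_option maxHeartbeats 1000000

open Real

private lemma hw_hd_sinh (c a : ℝ) (n : ℕ) (x : ℝ) :
    HasDerivAt (fun y : ℝ => c * y ^ n * Real.sinh (a * y))
      (c * (n * x ^ (n - 1)) * Real.sinh (a * x) + c * x ^ n * (a * Real.cosh (a * x))) x := by
  have h1 : HasDerivAt (fun y : ℝ => c * y ^ n) (c * (n * x ^ (n - 1))) x :=
    (hasDerivAt_pow n x).const_mul c
  have h2 : HasDerivAt (fun y : ℝ => Real.sinh (a * y)) (a * Real.cosh (a * x)) x := by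
    simpa [mul_comm] using ((hasDerivAt_id x).const_mul a).sinh
  exact h1.mul h2

private lemma hw_hd_cosh (c a : ℝ) (n : ℕ) (x : ℝ) :
    HasDerivAt (fun y : ℝ => c * y ^ n * Real.cosh (a * y))
      (c * (n * x ^ (n - 1)) * Real.cosh (a * x) + c * x ^ n * (a * Real.sinh (a * x))) x := by
  have h1 : HasDerivAt (fun y : ℝ => c * y ^ n) (c * (n * x ^ (n - 1))) x :=
    (hasDerivAt_pow n x).const_mul c
  have h2 : HasDerivAt (fun y : ℝ => Real.cosh (a * y)) (a * Real.sinh (a * x)) x := by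
    simpa [mul_comm] using ((hasDerivAt_id x).const_mul a).cosh
  exact h1.mul h2

private lemma hw_hd_pow (c : ℝ) (n : ℕ) (x : ℝ) :
    HasDerivAt (fun y : ℝ => c * y ^ n) (c * (n * x ^ (n - 1))) x :=
  (hasDerivAt_pow n x).const_mul c

private lemma hw_desc {g h : ℝ → ℝ} (hg : ∀ x, HasDerivAt g (h x) x) (h0 : 0 ≤ g 0)
    (hh : ∀ x, 0 < x → 0 < h x) : ∀ x, 0 < x → 0 < g x := by
  intro x hx
  have mono : StrictMonoOn g (Set.Ici 0) := by
    refine strictMonoOn_of_deriv_pos (convex_Ici 0) ?_ ?_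
    · exact (Differentiable.continuous (fun y => (hg y).differentiableAt)).continuousOn
    · intro y hy
      rw [interior_Ici] at hy
      rw [(hg y).deriv]
      exact hh y hy
  have h1 := mono Set.self_mem_Ici (Set.mem_Ici.mpr hx.le) hx
  linarith

noncomputable def hwF0 : ℝ → ℝ := fun x =>
  (1/4) * x ^ 1 * Real.sinh (3 * x) + 2 * x ^ 0 * Real.cosh (2 * x) + (-1) * x ^ 2 * Real.cosh (2 * x) + (1/2) * x ^ 1 * Real.sinh (2 * x) + (-23/1440) * x ^ 5 * Real.sinh (2 * x) + (-4) * x ^ 0 * Real.cosh (1 * x) + (-2) * x ^ 2 * Real.cosh (1 * x) + (1/4) * x ^ 1 * Real.sinh (1 * x) + (-23/720) * x ^ 5 * Real.sinh (1 * x) + 2 * x ^ 0 + (-1) * x ^ 2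

noncomputable def hwF1 : ℝ → ℝ := fun x =>
  (3/4) * x ^ 1 * Real.cosh (3 * x) + (1/4) * x ^ 0 * Real.sinh (3 * x) + (-1) * x ^ 1 * Real.cosh (2 * x) + (-23/720) * x ^ 5 * Real.cosh (2 * x) + (9/2) * x ^ 0 * Real.sinh (2 * x) + (-2) * x ^ 2 * Real.sinh (2 * x) + (-23/288) * x ^ 4 * Real.sinh (2 * x) + (-15/4) * x ^ 1 * Real.cosh (1 * x) + (-23/720) * x ^ 5 * Real.cosh (1 * x) + (-15/4) * x ^ 0 * Real.sinh (1 * x) + (-2) * x ^ 2 * Real.sinh (1 * x) + (-23/144) * x ^ 4 * Real.sinh (1 * x) + (-2) * x ^ 1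

noncomputable def hwF2 : ℝ → ℝ := fun x =>
  (3/2) * x ^ 0 * Real.cosh (3 * x) + (9/4) * x ^ 1 * Real.sinh (3 * x) + 8 * x ^ 0 * Real.cosh (2 * x) + (-4) * x ^ 2 * Real.cosh (2 * x) + (-23/72) * x ^ 4 * Real.cosh (2 * x) + (-6) * x ^ 1 * Real.sinh (2 * x) + (-23/72) * x ^ 3 * Real.sinh (2 * x) + (-23/360) * x ^ 5 * Real.sinh (2 * x) + (-15/2) * x ^ 0 * Real.cosh (1 * x) + (-2) * x ^ 2 * Real.cosh (1 * x) + (-23/72) * x ^ 4 * Real.cosh (1 * x) + (-31/4) * x ^ 1 * Real.sinh (1 * x) + (-23/36) * x ^ 3 * Real.sinh (1 * x) + (-23/720) * x ^ 5 * Real.sinh (1 * x) + (-2) * x ^ 0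

noncomputable def hwF3 : ℝ → ℝ := fun x =>
  (27/4) * x ^ 1 * Real.cosh (3 * x) + (27/4) * x ^ 0 * Real.sinh (3 * x) + (-20) * x ^ 1 * Real.cosh (2 * x) + (-23/12) * x ^ 3 * Real.cosh (2 * x) + (-23/180) * x ^ 5 * Real.cosh (2 * x) + 10 * x ^ 0 * Real.sinh (2 * x) + (-215/24) * x ^ 2 * Real.sinh (2 * x) + (-23/24) * x ^ 4 * Real.sinh (2 * x) + (-47/4) * x ^ 1 * Real.cosh (1 * x) + (-23/12) * x ^ 3 * Real.cosh (1 * x) + (-23/720) * x ^ 5 * Real.cosh (1 * x) + (-61/4) * x ^ 0 * Real.sinh (1 * x) + (-47/12) * x ^ 2 * Real.sinh (1 * x) + (-23/48) * x ^ 4 * Real.sinh (1 * x)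

noncomputable def hwF4 : ℝ → ℝ := fun x =>
  27 * x ^ 0 * Real.cosh (3 * x) + (81/4) * x ^ 1 * Real.sinh (3 * x) + (-71/3) * x ^ 2 * Real.cosh (2 * x) + (-23/9) * x ^ 4 * Real.cosh (2 * x) + (-695/12) * x ^ 1 * Real.sinh (2 * x) + (-23/3) * x ^ 3 * Real.sinh (2 * x) + (-23/90) * x ^ 5 * Real.sinh (2 * x) + (-27) * x ^ 0 * Real.cosh (1 * x) + (-29/3) * x ^ 2 * Real.cosh (1 * x) + (-23/36) * x ^ 4 * Real.cosh (1 * x) + (-235/12) * x ^ 1 * Real.sinh (1 * x) + (-23/6) * x ^ 3 * Real.sinh (1 * x) + (-23/720) * x ^ 5 * Real.sinh (1 * x)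

noncomputable def hwF5 : ℝ → ℝ := fun x =>
  (243/4) * x ^ 1 * Real.cosh (3 * x) + (405/4) * x ^ 0 * Real.sinh (3 * x) + (-979/6) * x ^ 1 * Real.cosh (2 * x) + (-230/9) * x ^ 3 * Real.cosh (2 * x) + (-23/45) * x ^ 5 * Real.cosh (2 * x) + (-695/12) * x ^ 0 * Real.sinh (2 * x) + (-211/3) * x ^ 2 * Real.sinh (2 * x) + (-115/18) * x ^ 4 * Real.sinh (2 * x) + (-467/12) * x ^ 1 * Real.cosh (1 * x) + (-115/18) * x ^ 3 * Real.cosh (1 * x) + (-23/720) * x ^ 5 * Real.cosh (1 * x) + (-559/12) * x ^ 0 * Real.sinh (1 * x) + (-127/6) * x ^ 2 * Real.sinh (1 * x) + (-115/144) * x ^ 4 * Real.sinh (1 * x)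

noncomputable def hwF6 : ℝ → ℝ := fun x =>
  (729/2) * x ^ 0 * Real.cosh (3 * x) + (729/4) * x ^ 1 * Real.sinh (3 * x) + (-279) * x ^ 0 * Real.cosh (2 * x) + (-652/3) * x ^ 2 * Real.cosh (2 * x) + (-46/3) * x ^ 4 * Real.cosh (2 * x) + (-467) * x ^ 1 * Real.sinh (2 * x) + (-230/3) * x ^ 3 * Real.sinh (2 * x) + (-46/45) * x ^ 5 * Real.sinh (2 * x) + (-171/2) * x ^ 0 * Real.cosh (1 * x) + (-121/3) * x ^ 2 * Real.cosh (1 * x) + (-23/24) * x ^ 4 * Real.cosh (1 * x) + (-325/4) * x ^ 1 * Real.sinh (1 * x) + (-115/12) * x ^ 3 * Real.sinh (1 * x) + (-23/720) * x ^ 5 * Real.sinh (1 * x)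

noncomputable def hwF7 : ℝ → ℝ := fun x =>
  (2187/4) * x ^ 1 * Real.cosh (3 * x) + (5103/4) * x ^ 0 * Real.sinh (3 * x) + (-4106/3) * x ^ 1 * Real.cosh (2 * x) + (-644/3) * x ^ 3 * Real.cosh (2 * x) + (-92/45) * x ^ 5 * Real.cosh (2 * x) + (-1025) * x ^ 0 * Real.sinh (2 * x) + (-1994/3) * x ^ 2 * Real.sinh (2 * x) + (-322/9) * x ^ 4 * Real.sinh (2 * x) + (-1943/12) * x ^ 1 * Real.cosh (1 * x) + (-161/12) * x ^ 3 * Real.cosh (1 * x) + (-23/720) * x ^ 5 * Real.cosh (1 * x) + (-667/4) * x ^ 0 * Real.sinh (1 * x) + (-829/12) * x ^ 2 * Real.sinh (1 * x) + (-161/144) * x ^ 4 * Real.sinh (1 * x)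

noncomputable def hwF8 : ℝ → ℝ := fun x =>
  4374 * x ^ 0 * Real.cosh (3 * x) + (6561/4) * x ^ 1 * Real.sinh (3 * x) + (-10256/3) * x ^ 0 * Real.cosh (2 * x) + (-5920/3) * x ^ 2 * Real.cosh (2 * x) + (-736/9) * x ^ 4 * Real.cosh (2 * x) + (-12200/3) * x ^ 1 * Real.sinh (2 * x) + (-5152/9) * x ^ 3 * Real.sinh (2 * x) + (-184/45) * x ^ 5 * Real.sinh (2 * x) + (-986/3) * x ^ 0 * Real.cosh (1 * x) + (-328/3) * x ^ 2 * Real.cosh (1 * x) + (-23/18) * x ^ 4 * Real.cosh (1 * x) + (-3601/12) * x ^ 1 * Real.sinh (1 * x) + (-161/9) * x ^ 3 * Real.sinh (1 * x) + (-23/720) * x ^ 5 * Real.sinh (1 * x)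

noncomputable def hwF9 : ℝ → ℝ := fun x =>
  (19683/4) * x ^ 1 * Real.cosh (3 * x) + (59049/4) * x ^ 0 * Real.sinh (3 * x) + (-12080) * x ^ 1 * Real.cosh (2 * x) + (-1472) * x ^ 3 * Real.cosh (2 * x) + (-368/45) * x ^ 5 * Real.cosh (2 * x) + (-10904) * x ^ 0 * Real.sinh (2 * x) + (-5664) * x ^ 2 * Real.sinh (2 * x) + (-184) * x ^ 4 * Real.sinh (2 * x) + (-2075/4) * x ^ 1 * Real.cosh (1 * x) + (-23) * x ^ 3 * Real.cosh (1 * x) + (-23/720) * x ^ 5 * Real.cosh (1 * x) + (-2515/4) * x ^ 0 * Real.sinh (1 * x) + (-163) * x ^ 2 * Real.sinh (1 * x) + (-23/16) * x ^ 4 * Real.sinh (1 * x)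

noncomputable def hwF10 : ℝ → ℝ := fun x =>
  (98415/2) * x ^ 0 * Real.cosh (3 * x) + (59049/4) * x ^ 1 * Real.sinh (3 * x) + (-33888) * x ^ 0 * Real.cosh (2 * x) + (-15744) * x ^ 2 * Real.cosh (2 * x) + (-3680/9) * x ^ 4 * Real.cosh (2 * x) + (-35488) * x ^ 1 * Real.sinh (2 * x) + (-3680) * x ^ 3 * Real.sinh (2 * x) + (-736/45) * x ^ 5 * Real.sinh (2 * x) + (-2295/2) * x ^ 0 * Real.cosh (1 * x) + (-232) * x ^ 2 * Real.cosh (1 * x) + (-115/72) * x ^ 4 * Real.cosh (1 * x) + (-3379/4) * x ^ 1 * Real.sinh (1 * x) + (-115/4) * x ^ 3 * Real.sinh (1 * x) + (-23/720) * x ^ 5 * Real.sinh (1 * x)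

noncomputable def hwF11 : ℝ → ℝ := fun x =>
  (177147/4) * x ^ 1 * Real.cosh (3 * x) + (649539/4) * x ^ 0 * Real.sinh (3 * x) + (-102464) * x ^ 1 * Real.cosh (2 * x) + (-80960/9) * x ^ 3 * Real.cosh (2 * x) + (-1472/45) * x ^ 5 * Real.cosh (2 * x) + (-103264) * x ^ 0 * Real.sinh (2 * x) + (-42528) * x ^ 2 * Real.sinh (2 * x) + (-8096/9) * x ^ 4 * Real.sinh (2 * x) + (-5235/4) * x ^ 1 * Real.cosh (1 * x) + (-1265/36) * x ^ 3 * Real.cosh (1 * x) + (-23/720) * x ^ 5 * Real.cosh (1 * x) + (-7969/4) * x ^ 0 * Real.sinh (1 * x) + (-1273/4) * x ^ 2 * Real.sinh (1 * x) + (-253/144) * x ^ 4 * Real.sinh (1 * x)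

noncomputable def hwF12 : ℝ → ℝ := fun x =>
  531441 * x ^ 0 * Real.cosh (3 * x) + (531441/4) * x ^ 1 * Real.sinh (3 * x) + (-308992) * x ^ 0 * Real.cosh (2 * x) + (-336128/3) * x ^ 2 * Real.cosh (2 * x) + (-5888/3) * x ^ 4 * Real.cosh (2 * x) + (-289984) * x ^ 1 * Real.sinh (2 * x) + (-64768/3) * x ^ 3 * Real.sinh (2 * x) + (-2944/45) * x ^ 5 * Real.sinh (2 * x) + (-3301) * x ^ 0 * Real.cosh (1 * x) + (-1271/3) * x ^ 2 * Real.cosh (1 * x) + (-23/12) * x ^ 4 * Real.cosh (1 * x) + (-7781/4) * x ^ 1 * Real.sinh (1 * x) + (-253/6) * x ^ 3 * Real.sinh (1 * x) + (-23/720) * x ^ 5 * Real.sinh (1 * x)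

noncomputable def hwF13 : ℝ → ℝ := fun x =>
  (1594323/4) * x ^ 1 * Real.cosh (3 * x) + (6908733/4) * x ^ 0 * Real.sinh (3 * x) + (-2412160/3) * x ^ 1 * Real.cosh (2 * x) + (-153088/3) * x ^ 3 * Real.cosh (2 * x) + (-5888/45) * x ^ 5 * Real.cosh (2 * x) + (-907968) * x ^ 0 * Real.sinh (2 * x) + (-866560/3) * x ^ 2 * Real.sinh (2 * x) + (-38272/9) * x ^ 4 * Real.sinh (2 * x) + (-33511/12) * x ^ 1 * Real.cosh (1 * x) + (-299/6) * x ^ 3 * Real.cosh (1 * x) + (-23/720) * x ^ 5 * Real.cosh (1 * x) + (-20985/4) * x ^ 0 * Real.sinh (1 * x) + (-3301/6) * x ^ 2 * Real.sinh (1 * x) + (-299/144) * x ^ 4 * Real.sinh (1 * x)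

noncomputable def hwF14 : ℝ → ℝ := fun x =>
  (11160261/2) * x ^ 0 * Real.cosh (3 * x) + (4782969/4) * x ^ 1 * Real.sinh (3 * x) + (-7859968/3) * x ^ 0 * Real.cosh (2 * x) + (-2192384/3) * x ^ 2 * Real.cosh (2 * x) + (-82432/9) * x ^ 4 * Real.cosh (2 * x) + (-6557440/3) * x ^ 1 * Real.sinh (2 * x) + (-1071616/9) * x ^ 3 * Real.sinh (2 * x) + (-11776/45) * x ^ 5 * Real.sinh (2 * x) + (-48233/6) * x ^ 0 * Real.cosh (1 * x) + (-2099/3) * x ^ 2 * Real.cosh (1 * x) + (-161/72) * x ^ 4 * Real.cosh (1 * x) + (-46715/12) * x ^ 1 * Real.sinh (1 * x) + (-2093/36) * x ^ 3 * Real.sinh (1 * x) + (-23/720) * x ^ 5 * Real.sinh (1 * x)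


private lemma hw_hd0 (x : ℝ) : HasDerivAt hwF0 (hwF1 x) x := by
  have h := (((((((((((hw_hd_sinh (1/4) 3 1 x).add (hw_hd_cosh (2) 2 0 x)).add (hw_hd_cosh (-1) 2 2 x)).add (hw_hd_sinh (1/2) 2 1 x)).add (hw_hd_sinh (-23/1440) 2 5 x)).add (hw_hd_cosh (-4) 1 0 x)).add (hw_hd_cosh (-2) 1 2 x)).add (hw_hd_sinh (1/4) 1 1 x)).add (hw_hd_sinh (-23/720) 1 5 x)).add (hw_hd_pow (2) 0 x)).add (hw_hd_pow (-1) 2 x))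
  convert h using 1 <;> try rfl
  simp only [hwF1]; push_cast; norm_num; ring

private lemma hw_hd1 (x : ℝ) : HasDerivAt hwF1 (hwF2 x) x := by
  have h := (((((((((((((hw_hd_cosh (3/4) 3 1 x).add (hw_hd_sinh (1/4) 3 0 x)).add (hw_hd_cosh (-1) 2 1 x)).add (hw_hd_cosh (-23/720) 2 5 x)).add (hw_hd_sinh (9/2) 2 0 x)).add (hw_hd_sinh (-2) 2 2 x)).add (hw_hd_sinh (-23/288) 2 4 x)).add (hw_hd_cosh (-15/4) 1 1 x)).add (hw_hd_cosh (-23/720) 1 5 x)).add (hw_hd_sinh (-15/4) 1 0 x)).add (hw_hd_sinh (-2) 1 2 x)).add (hw_hd_sinh (-23/144) 1 4 x)).add (hw_hd_pow (-2) 1 x))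
  convert h using 1 <;> try rfl
  simp only [hwF2]; push_cast; norm_num; ring

private lemma hw_hd2 (x : ℝ) : HasDerivAt hwF2 (hwF3 x) x := by
  have h := (((((((((((((((hw_hd_cosh (3/2) 3 0 x).add (hw_hd_sinh (9/4) 3 1 x)).add (hw_hd_cosh (8) 2 0 x)).add (hw_hd_cosh (-4) 2 2 x)).add (hw_hd_cosh (-23/72) 2 4 x)).add (hw_hd_sinh (-6) 2 1 x)).add (hw_hd_sinh (-23/72) 2 3 x)).add (hw_hd_sinh (-23/360) 2 5 x)).add (hw_hd_cosh (-15/2) 1 0 x)).add (hw_hd_cosh (-2) 1 2 x)).add (hw_hd_cosh (-23/72) 1 4 x)).add (hw_hd_sinh (-31/4) 1 1 x)).add (hw_hd_sinh (-23/36) 1 3 x)).add (hw_hd_sinh (-23/720) 1 5 x)).add (hw_hd_pow (-2) 0 x))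
  convert h using 1 <;> try rfl
  simp only [hwF3]; push_cast; norm_num; ring

private lemma hw_hd3 (x : ℝ) : HasDerivAt hwF3 (hwF4 x) x := by
  have h := ((((((((((((((hw_hd_cosh (27/4) 3 1 x).add (hw_hd_sinh (27/4) 3 0 x)).add (hw_hd_cosh (-20) 2 1 x)).add (hw_hd_cosh (-23/12) 2 3 x)).add (hw_hd_cosh (-23/180) 2 5 x)).add (hw_hd_sinh (10) 2 0 x)).add (hw_hd_sinh (-215/24) 2 2 x)).add (hw_hd_sinh (-23/24) 2 4 x)).add (hw_hd_cosh (-47/4) 1 1 x)).add (hw_hd_cosh (-23/12) 1 3 x)).add (hw_hd_cosh (-23/720) 1 5 x)).add (hw_hd_sinh (-61/4) 1 0 x)).add (hw_hd_sinh (-47/12) 1 2 x)).add (hw_hd_sinh (-23/48) 1 4 x))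
  convert h using 1 <;> try rfl
  simp only [hwF4]; push_cast; norm_num; ring

private lemma hw_hd4 (x : ℝ) : HasDerivAt hwF4 (hwF5 x) x := by
  have h := (((((((((((((hw_hd_cosh (27) 3 0 x).add (hw_hd_sinh (81/4) 3 1 x)).add (hw_hd_cosh (-71/3) 2 2 x)).add (hw_hd_cosh (-23/9) 2 4 x)).add (hw_hd_sinh (-695/12) 2 1 x)).add (hw_hd_sinh (-23/3) 2 3 x)).add (hw_hd_sinh (-23/90) 2 5 x)).add (hw_hd_cosh (-27) 1 0 x)).add (hw_hd_cosh (-29/3) 1 2 x)).add (hw_hd_cosh (-23/36) 1 4 x)).add (hw_hd_sinh (-235/12) 1 1 x)).add (hw_hd_sinh (-23/6) 1 3 x)).add (hw_hd_sinh (-23/720) 1 5 x))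
  convert h using 1 <;> try rfl
  simp only [hwF5]; push_cast; norm_num; ring

private lemma hw_hd5 (x : ℝ) : HasDerivAt hwF5 (hwF6 x) x := by
  have h := ((((((((((((((hw_hd_cosh (243/4) 3 1 x).add (hw_hd_sinh (405/4) 3 0 x)).add (hw_hd_cosh (-979/6) 2 1 x)).add (hw_hd_cosh (-230/9) 2 3 x)).add (hw_hd_cosh (-23/45) 2 5 x)).add (hw_hd_sinh (-695/12) 2 0 x)).add (hw_hd_sinh (-211/3) 2 2 x)).add (hw_hd_sinh (-115/18) 2 4 x)).add (hw_hd_cosh (-467/12) 1 1 x)).add (hw_hd_cosh (-115/18) 1 3 x)).add (hw_hd_cosh (-23/720) 1 5 x)).add (hw_hd_sinh (-559/12) 1 0 x)).add (hw_hd_sinh (-127/6) 1 2 x)).add (hw_hd_sinh (-115/144) 1 4 x))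
  convert h using 1 <;> try rfl
  simp only [hwF6]; push_cast; norm_num; ring

private lemma hw_hd6 (x : ℝ) : HasDerivAt hwF6 (hwF7 x) x := by
  have h := ((((((((((((((hw_hd_cosh (729/2) 3 0 x).add (hw_hd_sinh (729/4) 3 1 x)).add (hw_hd_cosh (-279) 2 0 x)).add (hw_hd_cosh (-652/3) 2 2 x)).add (hw_hd_cosh (-46/3) 2 4 x)).add (hw_hd_sinh (-467) 2 1 x)).add (hw_hd_sinh (-230/3) 2 3 x)).add (hw_hd_sinh (-46/45) 2 5 x)).add (hw_hd_cosh (-171/2) 1 0 x)).add (hw_hd_cosh (-121/3) 1 2 x)).add (hw_hd_cosh (-23/24) 1 4 x)).add (hw_hd_sinh (-325/4) 1 1 x)).add (hw_hd_sinh (-115/12) 1 3 x)).add (hw_hd_sinh (-23/720) 1 5 x))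
  convert h using 1 <;> try rfl
  simp only [hwF7]; push_cast; norm_num; ring

private lemma hw_hd7 (x : ℝ) : HasDerivAt hwF7 (hwF8 x) x := by
  have h := ((((((((((((((hw_hd_cosh (2187/4) 3 1 x).add (hw_hd_sinh (5103/4) 3 0 x)).add (hw_hd_cosh (-4106/3) 2 1 x)).add (hw_hd_cosh (-644/3) 2 3 x)).add (hw_hd_cosh (-92/45) 2 5 x)).add (hw_hd_sinh (-1025) 2 0 x)).add (hw_hd_sinh (-1994/3) 2 2 x)).add (hw_hd_sinh (-322/9) 2 4 x)).add (hw_hd_cosh (-1943/12) 1 1 x)).add (hw_hd_cosh (-161/12) 1 3 x)).add (hw_hd_cosh (-23/720) 1 5 x)).add (hw_hd_sinh (-667/4) 1 0 x)).add (hw_hd_sinh (-829/12) 1 2 x)).add (hw_hd_sinh (-161/144) 1 4 x))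
  convert h using 1 <;> try rfl
  simp only [hwF8]; push_cast; norm_num; ring

private lemma hw_hd8 (x : ℝ) : HasDerivAt hwF8 (hwF9 x) x := by
  have h := ((((((((((((((hw_hd_cosh (4374) 3 0 x).add (hw_hd_sinh (6561/4) 3 1 x)).add (hw_hd_cosh (-10256/3) 2 0 x)).add (hw_hd_cosh (-5920/3) 2 2 x)).add (hw_hd_cosh (-736/9) 2 4 x)).add (hw_hd_sinh (-12200/3) 2 1 x)).add (hw_hd_sinh (-5152/9) 2 3 x)).add (hw_hd_sinh (-184/45) 2 5 x)).add (hw_hd_cosh (-986/3) 1 0 x)).add (hw_hd_cosh (-328/3) 1 2 x)).add (hw_hd_cosh (-23/18) 1 4 x)).add (hw_hd_sinh (-3601/12) 1 1 x)).add (hw_hd_sinh (-161/9) 1 3 x)).add (hw_hd_sinh (-23/720) 1 5 x))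
  convert h using 1 <;> try rfl
  simp only [hwF9]; push_cast; norm_num; ring

private lemma hw_hd9 (x : ℝ) : HasDerivAt hwF9 (hwF10 x) x := by
  have h := ((((((((((((((hw_hd_cosh (19683/4) 3 1 x).add (hw_hd_sinh (59049/4) 3 0 x)).add (hw_hd_cosh (-12080) 2 1 x)).add (hw_hd_cosh (-1472) 2 3 x)).add (hw_hd_cosh (-368/45) 2 5 x)).add (hw_hd_sinh (-10904) 2 0 x)).add (hw_hd_sinh (-5664) 2 2 x)).add (hw_hd_sinh (-184) 2 4 x)).add (hw_hd_cosh (-2075/4) 1 1 x)).add (hw_hd_cosh (-23) 1 3 x)).add (hw_hd_cosh (-23/720) 1 5 x)).add (hw_hd_sinh (-2515/4) 1 0 x)).add (hw_hd_sinh (-163) 1 2 x)).add (hw_hd_sinh (-23/16) 1 4 x))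
  convert h using 1 <;> try rfl
  simp only [hwF10]; push_cast; norm_num; ring

private lemma hw_hd10 (x : ℝ) : HasDerivAt hwF10 (hwF11 x) x := by
  have h := ((((((((((((((hw_hd_cosh (98415/2) 3 0 x).add (hw_hd_sinh (59049/4) 3 1 x)).add (hw_hd_cosh (-33888) 2 0 x)).add (hw_hd_cosh (-15744) 2 2 x)).add (hw_hd_cosh (-3680/9) 2 4 x)).add (hw_hd_sinh (-35488) 2 1 x)).add (hw_hd_sinh (-3680) 2 3 x)).add (hw_hd_sinh (-736/45) 2 5 x)).add (hw_hd_cosh (-2295/2) 1 0 x)).add (hw_hd_cosh (-232) 1 2 x)).add (hw_hd_cosh (-115/72) 1 4 x)).add (hw_hd_sinh (-3379/4) 1 1 x)).add (hw_hd_sinh (-115/4) 1 3 x)).add (hw_hd_sinh (-23/720) 1 5 x))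
  convert h using 1 <;> try rfl
  simp only [hwF11]; push_cast; norm_num; ring

private lemma hw_hd11 (x : ℝ) : HasDerivAt hwF11 (hwF12 x) x := by
  have h := ((((((((((((((hw_hd_cosh (177147/4) 3 1 x).add (hw_hd_sinh (649539/4) 3 0 x)).add (hw_hd_cosh (-102464) 2 1 x)).add (hw_hd_cosh (-80960/9) 2 3 x)).add (hw_hd_cosh (-1472/45) 2 5 x)).add (hw_hd_sinh (-103264) 2 0 x)).add (hw_hd_sinh (-42528) 2 2 x)).add (hw_hd_sinh (-8096/9) 2 4 x)).add (hw_hd_cosh (-5235/4) 1 1 x)).add (hw_hd_cosh (-1265/36) 1 3 x)).add (hw_hd_cosh (-23/720) 1 5 x)).add (hw_hd_sinh (-7969/4) 1 0 x)).add (hw_hd_sinh (-1273/4) 1 2 x)).add (hw_hd_sinh (-253/144) 1 4 x))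
  convert h using 1 <;> try rfl
  simp only [hwF12]; push_cast; norm_num; ring

private lemma hw_hd12 (x : ℝ) : HasDerivAt hwF12 (hwF13 x) x := by
  have h := ((((((((((((((hw_hd_cosh (531441) 3 0 x).add (hw_hd_sinh (531441/4) 3 1 x)).add (hw_hd_cosh (-308992) 2 0 x)).add (hw_hd_cosh (-336128/3) 2 2 x)).add (hw_hd_cosh (-5888/3) 2 4 x)).add (hw_hd_sinh (-289984) 2 1 x)).add (hw_hd_sinh (-64768/3) 2 3 x)).add (hw_hd_sinh (-2944/45) 2 5 x)).add (hw_hd_cosh (-3301) 1 0 x)).add (hw_hd_cosh (-1271/3) 1 2 x)).add (hw_hd_cosh (-23/12) 1 4 x)).add (hw_hd_sinh (-7781/4) 1 1 x)).add (hw_hd_sinh (-253/6) 1 3 x)).add (hw_hd_sinh (-23/720) 1 5 x))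
  convert h using 1 <;> try rfl
  simp only [hwF13]; push_cast; norm_num; ring

private lemma hw_hd13 (x : ℝ) : HasDerivAt hwF13 (hwF14 x) x := by
  have h := ((((((((((((((hw_hd_cosh (1594323/4) 3 1 x).add (hw_hd_sinh (6908733/4) 3 0 x)).add (hw_hd_cosh (-2412160/3) 2 1 x)).add (hw_hd_cosh (-153088/3) 2 3 x)).add (hw_hd_cosh (-5888/45) 2 5 x)).add (hw_hd_sinh (-907968) 2 0 x)).add (hw_hd_sinh (-866560/3) 2 2 x)).add (hw_hd_sinh (-38272/9) 2 4 x)).add (hw_hd_cosh (-33511/12) 1 1 x)).add (hw_hd_cosh (-299/6) 1 3 x)).add (hw_hd_cosh (-23/720) 1 5 x)).add (hw_hd_sinh (-20985/4) 1 0 x)).add (hw_hd_sinh (-3301/6) 1 2 x)).add (hw_hd_sinh (-299/144) 1 4 x))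
  convert h using 1 <;> try rfl
  simp only [hwF14]; push_cast; norm_num; ring

private lemma hw_z0 : 0 ≤ hwF0 0 := by
  norm_num [hwF0, Real.sinh_zero, Real.cosh_zero]

private lemma hw_z1 : 0 ≤ hwF1 0 := by
  norm_num [hwF1, Real.sinh_zero, Real.cosh_zero]

private lemma hw_z2 : 0 ≤ hwF2 0 := by
  norm_num [hwF2, Real.sinh_zero, Real.cosh_zero]

private lemma hw_z3 : 0 ≤ hwF3 0 := by
  norm_num [hwF3, Real.sinh_zero, Real.cosh_zero]

private lemma hw_z4 : 0 ≤ hwF4 0 := by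
  norm_num [hwF4, Real.sinh_zero, Real.cosh_zero]

private lemma hw_z5 : 0 ≤ hwF5 0 := by
  norm_num [hwF5, Real.sinh_zero, Real.cosh_zero]

private lemma hw_z6 : 0 ≤ hwF6 0 := by
  norm_num [hwF6, Real.sinh_zero, Real.cosh_zero]

private lemma hw_z7 : 0 ≤ hwF7 0 := by
  norm_num [hwF7, Real.sinh_zero, Real.cosh_zero]

private lemma hw_z8 : 0 ≤ hwF8 0 := by
  norm_num [hwF8, Real.sinh_zero, Real.cosh_zero]

private lemma hw_z9 : 0 ≤ hwF9 0 := by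
  norm_num [hwF9, Real.sinh_zero, Real.cosh_zero]

private lemma hw_z10 : 0 ≤ hwF10 0 := by
  norm_num [hwF10, Real.sinh_zero, Real.cosh_zero]

private lemma hw_z11 : 0 ≤ hwF11 0 := by
  norm_num [hwF11, Real.sinh_zero, Real.cosh_zero]

private lemma hw_z12 : 0 ≤ hwF12 0 := by
  norm_num [hwF12, Real.sinh_zero, Real.cosh_zero]

private lemma hw_z13 : 0 ≤ hwF13 0 := by
  norm_num [hwF13, Real.sinh_zero, Real.cosh_zero]

private lemma hw_base : ∀ x, 0 < x → 0 < hwF14 x := by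
  intro x hx
  have hw0 : (0:ℝ) < Real.exp x := Real.exp_pos x
  have hw1 : 1 ≤ Real.exp x := Real.one_le_exp hx.le
  have hL : 1 + x + x ^ 2/2 + x ^ 3/6 + x ^ 4/24 + x ^ 5/120 + x ^ 6/720 ≤ Real.exp x := by
    have h := Real.sum_le_exp_of_nonneg hx.le 7
    simp [Finset.sum_range_succ, Nat.factorial] at h
    linarith
  set w := Real.exp x with hwdef
  have h2 : Real.exp (2*x) = w ^ 2 := by rw [two_mul, Real.exp_add]; ring
  have h3 : Real.exp (3*x) = w ^ 3 := by
    rw [show (3:ℝ)*x = x + x + x by ring, Real.exp_add, Real.exp_add]; ring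
  have hs1 : Real.sinh (1*x) = (w - w⁻¹)/2 := by rw [one_mul, Real.sinh_eq, Real.exp_neg]
  have hc1 : Real.cosh (1*x) = (w + w⁻¹)/2 := by rw [one_mul, Real.cosh_eq, Real.exp_neg]
  have hs2 : Real.sinh (2*x) = (w ^ 2 - (w ^ 2)⁻¹)/2 := by rw [Real.sinh_eq, Real.exp_neg, h2]
  have hc2 : Real.cosh (2*x) = (w ^ 2 + (w ^ 2)⁻¹)/2 := by rw [Real.cosh_eq, Real.exp_neg, h2]
  have hs3 : Real.sinh (3*x) = (w ^ 3 - (w ^ 3)⁻¹)/2 := by rw [Real.sinh_eq, Real.exp_neg, h3]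
  have hc3 : Real.cosh (3*x) = (w ^ 3 + (w ^ 3)⁻¹)/2 := by rw [Real.cosh_eq, Real.exp_neg, h3]
  have hwne : w ≠ 0 := ne_of_gt hw0
  have hw2 : 1 ≤ w ^ 2 := by nlinarith [hw1, hw0.le]
  have d10 : 0 ≤ w - 1 := sub_nonneg.mpr hw1
  have d21 : 0 ≤ w ^ 2 - w := by nlinarith [mul_nonneg hw0.le d10]
  have d42 : 0 ≤ w ^ 4 - w ^ 2 := by nlinarith [mul_nonneg (pow_nonneg hw0.le 2) (sub_nonneg.mpr hw2)]
  have d54 : 0 ≤ w ^ 5 - w ^ 4 := by nlinarith [mul_nonneg (pow_nonneg hw0.le 4) d10]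
  have hBp : 0 ≤ ((11160261/2) + (4782969/4) * x) := by linarith [pow_nonneg hx.le 2, pow_nonneg hx.le 3, pow_nonneg hx.le 4, pow_nonneg hx.le 5, pow_nonneg hx.le 6, pow_nonneg hx.le 7, hx.le]
  have hE : 0 ≤ ((17760847/6) + (55080713/12) * x + (19530077/6) * x ^ 2 + (101435359/72) * x ^ 3 + (60859685/144) * x ^ 4 + (138329269/1440) * x ^ 5 + (177147/10) * x ^ 6 + (531441/320) * x ^ 7) := by linarith [pow_nonneg hx.le 2, pow_nonneg hx.le 3, pow_nonneg hx.le 4, pow_nonneg hx.le 5, pow_nonneg hx.le 6, pow_nonneg hx.le 7, hx.le]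
  have hE2 : 0 ≤ ((8856307/3) + (9172333/2) * x + (19525879/6) * x ^ 2 + (33810391/24) * x ^ 3 + (60859363/144) * x ^ 4 + (46109741/480) * x ^ 5 + (177147/10) * x ^ 6 + (531441/320) * x ^ 7) := by linarith [pow_nonneg hx.le 2, pow_nonneg hx.le 3, pow_nonneg hx.le 4, pow_nonneg hx.le 5, pow_nonneg hx.le 6, pow_nonneg hx.le 7, hx.le]
  have hE3 : 0 ≤ ((5888127/2) + (9172333/2) * x + (6507227/2) * x ^ 2 + (33810391/24) * x ^ 3 + (20286347/48) * x ^ 4 + (46109741/480) * x ^ 5 + (177147/10) * x ^ 6 + (531441/320) * x ^ 7) := by linarith [pow_nonneg hx.le 2, pow_nonneg hx.le 3, pow_nonneg hx.le 4, pow_nonneg hx.le 5, pow_nonneg hx.le 6, pow_nonneg hx.le 7, hx.le]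
  have hE4 : 0 ≤ ((1944445/6) + (9172333/2) * x + (15136913/6) * x ^ 2 + (33810391/24) * x ^ 3 + (59540129/144) * x ^ 4 + (46109741/480) * x ^ 5 + (177147/10) * x ^ 6 + (531441/320) * x ^ 7) := by linarith [pow_nonneg hx.le 2, pow_nonneg hx.le 3, pow_nonneg hx.le 4, pow_nonneg hx.le 5, pow_nonneg hx.le 6, pow_nonneg hx.le 7, hx.le]
  have hA1s : 0 ≤ ((46715/12) * x + (2093/36) * x ^ 3 + (23/720) * x ^ 5) := by linarith [pow_nonneg hx.le 2, pow_nonneg hx.le 3, pow_nonneg hx.le 4, pow_nonneg hx.le 5, pow_nonneg hx.le 6, pow_nonneg hx.le 7, hx.le]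
  have hA2s : 0 ≤ ((6557440/3) * x + (1071616/9) * x ^ 3 + (11776/45) * x ^ 5) := by linarith [pow_nonneg hx.le 2, pow_nonneg hx.le 3, pow_nonneg hx.le 4, pow_nonneg hx.le 5, pow_nonneg hx.le 6, pow_nonneg hx.le 7, hx.le]
  have hR : 0 < ((17712614/3) + (13561697/4) * x + (15136913/6) * x ^ 2 + (33810391/24) * x ^ 3 + (59540129/144) * x ^ 4 + (46109741/480) * x ^ 5 + (177147/10) * x ^ 6 + (531441/320) * x ^ 7) := by linarith [pow_nonneg hx.le 2, pow_nonneg hx.le 3, pow_nonneg hx.le 4, pow_nonneg hx.le 5, pow_nonneg hx.le 6, pow_nonneg hx.le 7, hx.le]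
  have hT1 : 0 ≤ ((11160261/2) + (4782969/4) * x) * (w ^ 5 * (w - (1 + 1 * x + (1/2) * x ^ 2 + (1/6) * x ^ 3 + (1/24) * x ^ 4 + (1/120) * x ^ 5 + (1/720) * x ^ 6))) :=
    mul_nonneg hBp (mul_nonneg (pow_nonneg hw0.le 5) (by linarith [hL]))
  have hT2 : 0 ≤ ((17760847/6) + (55080713/12) * x + (19530077/6) * x ^ 2 + (101435359/72) * x ^ 3 + (60859685/144) * x ^ 4 + (138329269/1440) * x ^ 5 + (177147/10) * x ^ 6 + (531441/320) * x ^ 7) * (w ^ 5 - w ^ 4) := mul_nonneg hE d54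
  have hT3 : 0 ≤ ((8856307/3) + (9172333/2) * x + (19525879/6) * x ^ 2 + (33810391/24) * x ^ 3 + (60859363/144) * x ^ 4 + (46109741/480) * x ^ 5 + (177147/10) * x ^ 6 + (531441/320) * x ^ 7) * (w ^ 4 - w ^ 2) := mul_nonneg hE2 d42
  have hT4 : 0 ≤ ((5888127/2) + (9172333/2) * x + (6507227/2) * x ^ 2 + (33810391/24) * x ^ 3 + (20286347/48) * x ^ 4 + (46109741/480) * x ^ 5 + (177147/10) * x ^ 6 + (531441/320) * x ^ 7) * (w ^ 2 - w) := mul_nonneg hE3 d21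
  have hT5 : 0 ≤ ((1944445/6) + (9172333/2) * x + (15136913/6) * x ^ 2 + (33810391/24) * x ^ 3 + (59540129/144) * x ^ 4 + (46109741/480) * x ^ 5 + (177147/10) * x ^ 6 + (531441/320) * x ^ 7) * (w - 1) := mul_nonneg hE4 d10
  have hA1sw : 0 ≤ ((46715/12) * x + (2093/36) * x ^ 3 + (23/720) * x ^ 5) * w ^ 2 := mul_nonneg hA1s (pow_nonneg hw0.le 2)
  have hA2sw : 0 ≤ ((6557440/3) * x + (1071616/9) * x ^ 3 + (11776/45) * x ^ 5) * w := mul_nonneg hA2s hw0.le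
  have key : (0:ℝ) < (((11160261/2) + (4782969/4) * x)) * w ^ 6 + (((11160261/2) + (-4782969/4) * x)) - (((7859968/3) + (2192384/3) * x ^ 2 + (82432/9) * x ^ 4)) * (w ^ 5 + w) - (((6557440/3) * x + (1071616/9) * x ^ 3 + (11776/45) * x ^ 5)) * (w ^ 5 - w) - (((48233/6) + (2099/3) * x ^ 2 + (161/72) * x ^ 4)) * (w ^ 4 + w ^ 2) - (((46715/12) * x + (2093/36) * x ^ 3 + (23/720) * x ^ 5)) * (w ^ 4 - w ^ 2) := by
    linarith [hT1, hT2, hT3, hT4, hT5, hA1sw, hA2sw, hR]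
  have hEq : hwF14 x = ((((11160261/2) + (4782969/4) * x)) * w ^ 6 + (((11160261/2) + (-4782969/4) * x)) - (((7859968/3) + (2192384/3) * x ^ 2 + (82432/9) * x ^ 4)) * (w ^ 5 + w) - (((6557440/3) * x + (1071616/9) * x ^ 3 + (11776/45) * x ^ 5)) * (w ^ 5 - w) - (((48233/6) + (2099/3) * x ^ 2 + (161/72) * x ^ 4)) * (w ^ 4 + w ^ 2) - (((46715/12) * x + (2093/36) * x ^ 3 + (23/720) * x ^ 5)) * (w ^ 4 - w ^ 2)) / (2 * w ^ 3) := by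
    simp only [hwF14]
    rw [hs1, hc1, hs2, hc2, hs3, hc3]
    field_simp
    ring
  rw [hEq]
  exact div_pos key (by positivity)

private lemma hw_p14 : ∀ x, 0 < x → 0 < hwF14 x := hw_base

private lemma hw_p13 : ∀ x, 0 < x → 0 < hwF13 x := hw_desc hw_hd13 hw_z13 hw_p14

private lemma hw_p12 : ∀ x, 0 < x → 0 < hwF12 x := hw_desc hw_hd12 hw_z12 hw_p13

private lemma hw_p11 : ∀ x, 0 < x → 0 < hwF11 x := hw_desc hw_hd11 hw_z11 hw_p12

private lemma hw_p10 : ∀ x, 0 < x → 0 < hwF10 x := hw_desc hw_hd10 hw_z10 hw_p11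

private lemma hw_p9 : ∀ x, 0 < x → 0 < hwF9 x := hw_desc hw_hd9 hw_z9 hw_p10

private lemma hw_p8 : ∀ x, 0 < x → 0 < hwF8 x := hw_desc hw_hd8 hw_z8 hw_p9

private lemma hw_p7 : ∀ x, 0 < x → 0 < hwF7 x := hw_desc hw_hd7 hw_z7 hw_p8

private lemma hw_p6 : ∀ x, 0 < x → 0 < hwF6 x := hw_desc hw_hd6 hw_z6 hw_p7

private lemma hw_p5 : ∀ x, 0 < x → 0 < hwF5 x := hw_desc hw_hd5 hw_z5 hw_p6

private lemma hw_p4 : ∀ x, 0 < x → 0 < hwF4 x := hw_desc hw_hd4 hw_z4 hw_p5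

private lemma hw_p3 : ∀ x, 0 < x → 0 < hwF3 x := hw_desc hw_hd3 hw_z3 hw_p4

private lemma hw_p2 : ∀ x, 0 < x → 0 < hwF2 x := hw_desc hw_hd2 hw_z2 hw_p3

private lemma hw_p1 : ∀ x, 0 < x → 0 < hwF1 x := hw_desc hw_hd1 hw_z1 hw_p2

private lemma hw_p0 : ∀ x, 0 < x → 0 < hwF0 x := hw_desc hw_hd0 hw_z0 hw_p1

theorem hyperbolic_wilker (x : ℝ) (hx : 0 < x) :
    Real.sinh x / x + (Real.tanh (x / 2) / (x / 2)) ^ 2 >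
      2 + (23 / 720) * x ^ 3 * Real.tanh x := by
  have key : 0 < hwF0 x := hw_p0 x hx
  have hc : 0 < Real.cosh x := Real.cosh_pos x
  have hc1 : 0 < Real.cosh x + 1 := by linarith
  have hx0 : x ≠ 0 := ne_of_gt hx
  have h3 : Real.sinh (3*x) = 4*Real.sinh x*Real.cosh x ^ 2 - Real.sinh x := by
    rw [show (3:ℝ)*x = 2*x + x by ring, Real.sinh_add, Real.sinh_two_mul, Real.cosh_two_mul,
      Real.sinh_sq]
    ring
  have h2s : Real.sinh (2*x) = 2*Real.sinh x*Real.cosh x := Real.sinh_two_mul x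
  have h2c : Real.cosh (2*x) = 2*Real.cosh x ^ 2 - 1 := by
    rw [Real.cosh_two_mul, Real.sinh_sq]; ring
  have ht : Real.tanh (x/2) ^ 2 = (Real.cosh x - 1)/(Real.cosh x + 1) := by
    have e1 : Real.sinh (x/2) ^ 2 = Real.cosh (x/2) ^ 2 - 1 := Real.sinh_sq _
    have e2 : Real.cosh x = 2*Real.cosh (x/2) ^ 2 - 1 := by
      rw [show x = 2*(x/2) by ring, Real.cosh_two_mul, Real.sinh_sq]
      ring_nf
    have hcc : 0 < Real.cosh (x/2) := Real.cosh_pos _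
    rw [Real.tanh_eq_sinh_div_cosh, div_pow, e1, e2]
    field_simp
    ring
  rw [gt_iff_lt, ← sub_pos]
  have expand : 2 + 23 / 720 * x ^ 3 * Real.tanh x -
      (Real.sinh x / x + (Real.tanh (x / 2) / (x / 2)) ^ 2) =
      -(hwF0 x / (x ^ 2 * Real.cosh x * (Real.cosh x + 1))) := by
    simp only [hwF0]
    rw [h3, h2s, h2c, div_pow, ht, Real.tanh_eq_sinh_div_cosh]
    simp only [one_mul]
    field_simp
    ring
  have hden : 0 < x ^ 2 * Real.cosh x * (Real.cosh x + 1) := by positivity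
  nlinarith [div_pos key hden, expand]
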